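/- Semi-discrete Harten lemma (periodic grid). Let N ≥ 1 and let v : ℝ → (ZMod N → ℝ) be differentiable in t, and let C, D : ℝ → (ZMod N → ℝ) be continuous with C_j(t) ≥ 0 and D_j(t) ≥ 0 for all j and t. Suppose v satisfies the incremental-form ODE system d(v_j)/dt = C_j(t)·(v_{j+1} − v_j) − D_{j−1}(t)·(v_j − v_{j−1}) for every j ∈ ZMod N and all t. Then the total variation TV(v(t)) = Σ_{j ∈ ZMod N} |v_{j+1}(t) − v_j(t)| is a nonincreasing function of t. -/

import Mathlib

private theorem harten_aux (N : ℕ) [NeZero N]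
    (w A B : ℝ → ZMod N → ℝ)
    (hAcont : ∀ j : ZMod N, Continuous (fun t => A t j))
    (hBcont : ∀ j : ZMod N, Continuous (fun t => B t j))
    (hA : ∀ (t : ℝ) (j : ZMod N), 0 ≤ A t j)
    (hB : ∀ (t : ℝ) (j : ZMod N), 0 ≤ B t j)
    (hw : ∀ (t : ℝ) (j : ZMod N), HasDerivAt (fun s => w s j)
      (A t (j+1) * w t (j+1) + B t (j-1) * w t (j-1) - (A t j + B t j) * w t j) t) :
    Antitone (fun t => ∑ j : ZMod N, |w t j|) := by
  intro t1 t2 h12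
  show (∑ j : ZMod N, |w t2 j|) ≤ ∑ j : ZMod N, |w t1 j|
  obtain ⟨t0, ht0mem, ht0⟩ := (isCompact_Icc (a := t1) (b := t2)).exists_isMaxOn
    (Set.nonempty_Icc.mpr h12)
    (Continuous.continuousOn (s := Set.Icc t1 t2)
      (continuous_finset_sum Finset.univ fun j _ => (hAcont j).add (hBcont j)))
  set M : ℝ := ∑ j : ZMod N, (A t0 j + B t0 j) with hMdef
  have hM0 : 0 ≤ M := Finset.sum_nonneg fun j _ => add_nonneg (hA _ _) (hB _ _)
  have hMb : ∀ t ∈ Set.Icc t1 t2, (∑ j : ZMod N, (A t j + B t j)) ≤ M :=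
    fun t ht => ht0 ht
  refine le_of_forall_pos_le_add fun δ hδ => ?_
  have hsub : (0:ℝ) ≤ t2 - t1 := sub_nonneg.mpr h12
  have hNc : (0:ℝ) ≤ (N : ℝ) := Nat.cast_nonneg N
  have hK : (0:ℝ) < M * (t2 - t1) + N + 1 := by nlinarith
  set ε : ℝ := δ / (M * (t2 - t1) + N + 1) with hεdef
  have hε : 0 < ε := div_pos hδ hK
  -- basic facts about the mollified absolute value
  have hqpos : ∀ x : ℝ, 0 < Real.sqrt (x^2 + ε^2) := fun x =>
    Real.sqrt_pos.mpr (by positivity)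
  have hqle : ∀ x : ℝ, Real.sqrt (x^2 + ε^2) ≤ |x| + ε := by
    intro x
    have h1 : x^2 + ε^2 ≤ (|x| + ε)^2 := by nlinarith [abs_nonneg x, sq_abs x]
    calc Real.sqrt (x^2+ε^2) ≤ Real.sqrt ((|x|+ε)^2) := Real.sqrt_le_sqrt h1
      _ = |x| + ε := Real.sqrt_sq (by positivity)
  have hqge : ∀ x : ℝ, |x| ≤ Real.sqrt (x^2 + ε^2) := by
    intro x
    rw [← Real.sqrt_sq_eq_abs]
    exact Real.sqrt_le_sqrt (by nlinarith)
  have hsle : ∀ x y : ℝ, y * (x / Real.sqrt (x^2 + ε^2)) ≤ |y| := by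
    intro x y
    calc y * (x / Real.sqrt (x^2+ε^2)) ≤ |y * (x / Real.sqrt (x^2+ε^2))| := le_abs_self _
      _ = |y| * |x / Real.sqrt (x^2+ε^2)| := abs_mul _ _
      _ ≤ |y| * 1 := by
          refine mul_le_mul_of_nonneg_left ?_ (abs_nonneg y)
          rw [abs_div, abs_of_nonneg (Real.sqrt_nonneg _)]
          exact div_le_one_of_le₀ (hqge x) (Real.sqrt_nonneg _)
      _ = |y| := mul_one _
  have hself : ∀ x : ℝ, |x| - ε ≤ x * (x / Real.sqrt (x^2 + ε^2)) := by
    intro x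
    rw [mul_div_assoc', le_div_iff₀ (hqpos x)]
    have h1 := hqle x
    have h2 := hqge x
    have h3 := (hqpos x).le
    have hq2 : Real.sqrt (x^2 + ε^2) ^ 2 = x^2 + ε^2 := Real.sq_sqrt (by positivity)
    nlinarith [abs_nonneg x, sq_abs x, hε.le,
      mul_nonneg (sub_nonneg.mpr h2) h3]
  -- derivative of the mollified terms
  have hderivq : ∀ (t : ℝ) (j : ZMod N),
      HasDerivAt (fun s => Real.sqrt (w s j ^ 2 + ε ^ 2))
        ((w t j / Real.sqrt (w t j ^ 2 + ε ^ 2)) *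
          (A t (j+1) * w t (j+1) + B t (j-1) * w t (j-1) - (A t j + B t j) * w t j)) t := by
    intro t j
    have h1 : HasDerivAt (fun s => w s j ^ 2 + ε ^ 2)
        (2 * w t j * (A t (j+1) * w t (j+1) + B t (j-1) * w t (j-1)
          - (A t j + B t j) * w t j)) t := by
      have h := ((hw t j).fun_pow 2).add_const (ε^2)
      refine h.congr_deriv ?_
      push_cast
      ring
    have h2 := h1.sqrt (by positivity)
    convert h2 using 1
    have hne := (hqpos (w t j)).ne'
    field_simp
  -- derivative of the mollified TV minus correction
  have hg : ∀ t : ℝ, HasDerivAt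
      (fun t => (∑ j : ZMod N, Real.sqrt (w t j ^ 2 + ε ^ 2)) - ε * M * t)
      ((∑ j : ZMod N, (w t j / Real.sqrt (w t j ^ 2 + ε ^ 2)) *
          (A t (j+1) * w t (j+1) + B t (j-1) * w t (j-1) - (A t j + B t j) * w t j))
        - ε * M) t := by
    intro t
    refine (HasDerivAt.fun_sum fun j _ => hderivq t j).sub ?_
    simpa using (hasDerivAt_id t).const_mul (ε * M)
  -- the key derivative estimate
  have key : ∀ t ∈ Set.Icc t1 t2,
      (∑ j : ZMod N, (w t j / Real.sqrt (w t j ^ 2 + ε ^ 2)) *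
          (A t (j+1) * w t (j+1) + B t (j-1) * w t (j-1) - (A t j + B t j) * w t j))
        ≤ ε * M := by
    intro t ht
    have reindex1 : (∑ j : ZMod N, (w t j / Real.sqrt (w t j ^ 2 + ε ^ 2)) *
          (A t (j+1) * w t (j+1)))
        = ∑ j : ZMod N, (w t (j-1) / Real.sqrt (w t (j-1) ^ 2 + ε ^ 2)) *
          (A t j * w t j) := by
      refine Fintype.sum_equiv (Equiv.addRight (1 : ZMod N)) _ _ fun i => ?_
      simp [add_sub_cancel_right]
    have reindex2 : (∑ j : ZMod N, (w t j / Real.sqrt (w t j ^ 2 + ε ^ 2)) *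
          (B t (j-1) * w t (j-1)))
        = ∑ j : ZMod N, (w t (j+1) / Real.sqrt (w t (j+1) ^ 2 + ε ^ 2)) *
          (B t j * w t j) := by
      refine Fintype.sum_equiv (Equiv.subRight (1 : ZMod N)) _ _ fun i => ?_
      simp [sub_add_cancel]
    have step1 : (∑ j : ZMod N, (w t j / Real.sqrt (w t j ^ 2 + ε ^ 2)) *
          (A t (j+1) * w t (j+1) + B t (j-1) * w t (j-1) - (A t j + B t j) * w t j))
        = ∑ j : ZMod N,
            ((w t (j-1) / Real.sqrt (w t (j-1) ^ 2 + ε ^ 2)) * (A t j * w t j)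
            + (w t (j+1) / Real.sqrt (w t (j+1) ^ 2 + ε ^ 2)) * (B t j * w t j)
            - (w t j / Real.sqrt (w t j ^ 2 + ε ^ 2)) * ((A t j + B t j) * w t j)) := by
      rw [Finset.sum_sub_distrib, Finset.sum_add_distrib, ← reindex1, ← reindex2,
        ← Finset.sum_add_distrib, ← Finset.sum_sub_distrib]
      exact Finset.sum_congr rfl fun j _ => by ring
    rw [step1]
    have est : ∀ j : ZMod N,
        (w t (j-1) / Real.sqrt (w t (j-1) ^ 2 + ε ^ 2)) * (A t j * w t j)
        + (w t (j+1) / Real.sqrt (w t (j+1) ^ 2 + ε ^ 2)) * (B t j * w t j)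
        - (w t j / Real.sqrt (w t j ^ 2 + ε ^ 2)) * ((A t j + B t j) * w t j)
        ≤ (A t j + B t j) * ε := by
      intro j
      have e1 : w t j * (w t (j-1) / Real.sqrt (w t (j-1) ^ 2 + ε ^ 2)) ≤ |w t j| :=
        hsle _ _
      have e2 : w t j * (w t (j+1) / Real.sqrt (w t (j+1) ^ 2 + ε ^ 2)) ≤ |w t j| :=
        hsle _ _
      have e3 : |w t j| - ε ≤ w t j * (w t j / Real.sqrt (w t j ^ 2 + ε ^ 2)) :=
        hself _
      have hAj := hA t j
      have hBj := hB t j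
      nlinarith [mul_le_mul_of_nonneg_left (by linarith : w t j *
          (w t (j-1) / Real.sqrt (w t (j-1) ^ 2 + ε ^ 2)) - w t j *
          (w t j / Real.sqrt (w t j ^ 2 + ε ^ 2)) ≤ ε) hAj,
        mul_le_mul_of_nonneg_left (by linarith : w t j *
          (w t (j+1) / Real.sqrt (w t (j+1) ^ 2 + ε ^ 2)) - w t j *
          (w t j / Real.sqrt (w t j ^ 2 + ε ^ 2)) ≤ ε) hBj]
    calc (∑ j : ZMod N, _) ≤ ∑ j : ZMod N, (A t j + B t j) * ε :=
          Finset.sum_le_sum fun j _ => est j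
      _ = (∑ j : ZMod N, (A t j + B t j)) * ε := by rw [Finset.sum_mul]
      _ ≤ M * ε := mul_le_mul_of_nonneg_right (hMb t ht) hε.le
      _ = ε * M := mul_comm _ _
  -- antitone on the interval
  have hgmono : AntitoneOn
      (fun t => (∑ j : ZMod N, Real.sqrt (w t j ^ 2 + ε ^ 2)) - ε * M * t)
      (Set.Icc t1 t2) := by
    refine antitoneOn_of_deriv_nonpos (convex_Icc t1 t2) ?_ ?_ ?_
    · exact (Differentiable.continuous fun t => (hg t).differentiableAt).continuousOn
    · exact fun x _ => (hg x).differentiableAt.differentiableWithinAt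
    · intro x hx
      rw [(hg x).deriv]
      have hxmem : x ∈ Set.Icc t1 t2 := interior_subset hx
      have := key x hxmem
      linarith
  have hg12 := hgmono (Set.left_mem_Icc.mpr h12) (Set.right_mem_Icc.mpr h12) h12
  simp only at hg12
  have h1 : (∑ j : ZMod N, |w t2 j|) ≤ ∑ j : ZMod N, Real.sqrt (w t2 j ^ 2 + ε ^ 2) :=
    Finset.sum_le_sum fun j _ => hqge _
  have h2 : (∑ j : ZMod N, Real.sqrt (w t1 j ^ 2 + ε ^ 2))
      ≤ (∑ j : ZMod N, |w t1 j|) + N * ε := by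
    calc (∑ j : ZMod N, Real.sqrt (w t1 j ^ 2 + ε ^ 2))
        ≤ ∑ j : ZMod N, (|w t1 j| + ε) := Finset.sum_le_sum fun j _ => hqle _
      _ = (∑ j : ZMod N, |w t1 j|) + N * ε := by
          rw [Finset.sum_add_distrib, Finset.sum_const, Finset.card_univ, ZMod.card,
            nsmul_eq_mul]
  have hεK : ε * (M * (t2 - t1) + N + 1) = δ := by
    rw [hεdef]; field_simp
  have hfin : (N:ℝ) * ε + ε * M * (t2 - t1) ≤ δ := by nlinarith [hε.le]
  linarith

theorem harten_semidiscrete_TVD (N : ℕ) [NeZero N]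
    (v C D : ℝ → ZMod N → ℝ)
    (hv : ∀ j : ZMod N, Differentiable ℝ (fun t => v t j))
    (hCcont : ∀ j : ZMod N, Continuous (fun t => C t j))
    (hDcont : ∀ j : ZMod N, Continuous (fun t => D t j))
    (hCpos : ∀ (t : ℝ) (j : ZMod N), 0 ≤ C t j)
    (hDpos : ∀ (t : ℝ) (j : ZMod N), 0 ≤ D t j)
    (hode : ∀ (t : ℝ) (j : ZMod N),
      HasDerivAt (fun s => v s j)
        (C t j * (v t (j + 1) - v t j) - D t (j - 1) * (v t j - v t (j - 1))) t) :
    Antitone (fun t => ∑ j : ZMod N, |v t (j + 1) - v t j|) := by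
  have hw : ∀ (t : ℝ) (j : ZMod N),
      HasDerivAt (fun s => v s (j + 1) - v s j)
        (C t (j+1) * (v t (j+1+1) - v t (j+1)) + D t (j-1) * (v t (j-1+1) - v t (j-1))
          - (C t j + D t j) * (v t (j+1) - v t j)) t := by
    intro t j
    have h := (hode t (j+1)).fun_sub (hode t j)
    have hj : (j : ZMod N) + 1 - 1 = j := add_sub_cancel_right j 1
    have hj2 : (j : ZMod N) - 1 + 1 = j := sub_add_cancel j 1
    rw [hj] at h
    rw [hj2]
    refine h.congr_deriv ?_
    ring
  exact harten_aux N (fun t j => v t (j+1) - v t j) C D hCcont hDcont hCpos hDpos hw
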